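/- Let d ≥ 1, s > 0, and let f be a Borel probability measure on ℝ^d. Then for every N ≥ 1, ∫_{(ℝ^d)^N} ‖μ^N_V − f‖²_{Ḣ^{−s}} df^{⊗N}(V) = (1/N) · ∫_{ℝ^d} (1 − |f̂(ξ)|²)/|ξ|^{2s} dξ (as an identity of possibly infinite nonnegative quantities). -/

import Mathlib

open MeasureTheory Filter
open scoped ENNReal BigOperators Topology

noncomputable section


/-- `ℝ^d` as a Euclidean space. -/
abbrev Euc (d : ℕ) : Type := EuclideanSpace ℝ (Fin d)

/-- Fourier transform of a measure: `f̂(ξ) = ∫ e^{-i v·ξ} df(v)`. -/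
def fourierM {d : ℕ} (f : Measure (Euc d)) (ξ : Euc d) : ℂ :=
  ∫ v, Complex.exp (-(Complex.I * ((inner ℝ v ξ : ℝ) : ℂ))) ∂f

/-- Squared homogeneous negative Sobolev norm `‖f-g‖²_{Ḣ^{-s}}`, valued in `ℝ≥0∞`. -/
def homSobSq {d : ℕ} (s : ℝ) (f g : Measure (Euc d)) : ℝ≥0∞ :=
  ∫⁻ ξ, ENNReal.ofReal (‖fourierM f ξ - fourierM g ξ‖ ^ 2 / ‖ξ‖ ^ (2 * s))

/-- Empirical measure `μ^N_V = (1/N) ∑ δ_{v_i}`. -/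
def empMeas {E : Type*} [MeasurableSpace E] {N : ℕ} (V : Fin N → E) : Measure E :=
  (N : ℝ≥0∞)⁻¹ • ∑ i : Fin N, Measure.dirac (V i)

lemma integrable_of_bound {α : Type*} [MeasurableSpace α] {μ : Measure α} [IsFiniteMeasure μ]
    {F : Type*} [NormedAddCommGroup F] {g : α → F} (hg : AEStronglyMeasurable g μ)
    (C : ℝ) (h : ∀ x, ‖g x‖ ≤ C) : Integrable g μ :=
  (integrable_const C).mono' hg (ae_of_all _ h)

lemma map_eval_pi_meas {E : Type*} [MeasurableSpace E] {N : ℕ} (μ : Measure E)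
    [IsProbabilityMeasure μ] (i : Fin N) :
    (Measure.pi fun _ : Fin N => μ).map (fun V => V i) = μ := by
  ext s hs
  rw [Measure.map_apply (measurable_pi_apply i) hs]
  have hpre : (fun V : Fin N → E => V i) ⁻¹' s
      = Set.pi Set.univ (fun k => if k = i then s else Set.univ) := by
    ext V
    simp only [Set.mem_preimage, Set.mem_pi, Set.mem_univ, forall_true_left]
    constructor
    · intro h k
      by_cases hk : k = i <;> simp [hk, h]
    · intro h
      simpa using h i
  rw [hpre, Measure.pi_pi]
  have : ∀ k : Fin N, μ (if k = i then s else Set.univ) = if k = i then μ s else 1 := by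
    intro k; by_cases hk : k = i <;> simp [hk]
  simp_rw [this]
  simp [Finset.prod_ite_eq']

lemma map_pair_pi_meas {E : Type*} [MeasurableSpace E] {N : ℕ} (μ : Measure E)
    [IsProbabilityMeasure μ] {i j : Fin N} (hij : i ≠ j) :
    (Measure.pi fun _ : Fin N => μ).map (fun V => (V i, V j)) = μ.prod μ := by
  refine (Measure.prod_eq fun s t hs ht => ?_).symm
  rw [Measure.map_apply ((measurable_pi_apply i).prodMk (measurable_pi_apply j)) (hs.prod ht)]
  have hpre : (fun V : Fin N → E => (V i, V j)) ⁻¹' (s ×ˢ t)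
      = Set.pi Set.univ (fun k => if k = i then s else if k = j then t else Set.univ) := by
    ext V
    simp only [Set.mem_preimage, Set.mem_prod, Set.mem_pi, Set.mem_univ, forall_true_left]
    constructor
    · rintro ⟨h1, h2⟩ k
      by_cases hk : k = i
      · simp [hk, h1]
      · by_cases hk' : k = j
        · subst hk'; simp [hij.symm, h2]
        · simp [hk, hk']
    · intro h
      refine ⟨by simpa [hij] using h i, ?_⟩
      have := h j
      simpa [hij.symm] using this
  rw [hpre, Measure.pi_pi]
  have : ∀ k : Fin N, μ (if k = i then s else if k = j then t else Set.univ)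
      = (if k = i then μ s else 1) * (if k = j then μ t else 1) := by
    intro k
    by_cases hk : k = i
    · subst hk; simp [hij]
    · by_cases hk' : k = j
      · subst hk'; simp [hij.symm]
      · simp [hk, hk']
  simp_rw [this]
  rw [Finset.prod_mul_distrib]
  simp [Finset.prod_ite_eq']

-- continuity of the kernel
lemma hFcont (d : ℕ) : Continuous fun p : Euc d × Euc d =>
    Complex.exp (-(Complex.I * ((inner ℝ p.2 p.1 : ℝ) : ℂ))) := by
  have h1 : Continuous fun p : Euc d × Euc d => (inner ℝ p.2 p.1 : ℝ) :=
    continuous_inner.comp (continuous_snd.prodMk continuous_fst)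
  exact Complex.continuous_exp.comp ((continuous_const.mul
    (Complex.continuous_ofReal.comp h1)).neg)

lemma hFcont' (d : ℕ) {α : Type*} [TopologicalSpace α] {g h : α → Euc d}
    (hg : Continuous g) (hh : Continuous h) :
    Continuous fun a => Complex.exp (-(Complex.I * ((inner ℝ (g a) (h a) : ℝ) : ℂ))) := by
  have h1 : Continuous fun a : α => (inner ℝ (g a) (h a) : ℝ) :=
    continuous_inner.comp (hg.prodMk hh)
  exact Complex.continuous_exp.comp ((continuous_const.mul
    (Complex.continuous_ofReal.comp h1)).neg)

lemma hXnorm (d : ℕ) (ξ v : Euc d) :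
    ‖Complex.exp (-(Complex.I * ((inner ℝ v ξ : ℝ) : ℂ)))‖ = 1 := by
  rw [Complex.norm_exp]
  simp [Complex.mul_re]

lemma fourierM_meas {d : ℕ} (f : Measure (Euc d)) [IsProbabilityMeasure f] :
    StronglyMeasurable (fourierM f) :=
  (hFcont d).stronglyMeasurable.integral_prod_right'

lemma fourierM_norm_le {d : ℕ} (f : Measure (Euc d)) [IsProbabilityMeasure f] (ξ : Euc d) :
    ‖fourierM f ξ‖ ≤ 1 := by
  unfold fourierM
  calc ‖∫ v, Complex.exp (-(Complex.I * ((inner ℝ v ξ : ℝ) : ℂ))) ∂f‖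
      ≤ ∫ v, ‖Complex.exp (-(Complex.I * ((inner ℝ v ξ : ℝ) : ℂ)))‖ ∂f :=
        norm_integral_le_integral_norm _
    _ = ∫ _, (1:ℝ) ∂f := by
        refine integral_congr_ae (ae_of_all _ fun v => ?_)
        exact hXnorm d ξ v
    _ = 1 := by simp

lemma fourierM_empMeas {d N : ℕ} (V : Fin N → Euc d) (ξ : Euc d) :
    fourierM (empMeas V) ξ
      = (N : ℝ)⁻¹ • ∑ i : Fin N, Complex.exp (-(Complex.I * ((inner ℝ (V i) ξ : ℝ) : ℂ))) := by
  unfold fourierM empMeas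
  rw [integral_smul_measure]
  have hint : ∀ i ∈ Finset.univ, Integrable
      (fun v : Euc d => Complex.exp (-(Complex.I * ((inner ℝ v ξ : ℝ) : ℂ))))
      (Measure.dirac (V i)) := by
    intro i _
    refine (integrable_const (Complex.exp
      (-(Complex.I * ((inner ℝ (V i) ξ : ℝ) : ℂ))))).congr ?_
    rw [Filter.EventuallyEq, ae_dirac_eq]
    exact Filter.eventually_pure.2 rfl
  rw [integral_finset_sum_measure hint]
  simp_rw [integral_dirac]
  simp

lemma my_integral_re {α : Type*} [MeasurableSpace α] {ν : Measure α} {g : α → ℂ}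
    (h : Integrable g ν) : ∫ x, (g x).re ∂ν = (∫ x, g x ∂ν).re := by
  have := integral_re (𝕜 := ℂ) h
  simpa [RCLike.re_to_complex] using this

lemma integral_empirical_varsq {E : Type*} [MeasurableSpace E] (μ : Measure E)
    [IsProbabilityMeasure μ] {X : E → ℂ} (hX : Measurable X) (hX1 : ∀ v, ‖X v‖ = 1)
    {N : ℕ} (hN : 1 ≤ N) :
    ∫ V : Fin N → E, ‖(N : ℝ)⁻¹ • ∑ i : Fin N, X (V i) - ∫ v, X v ∂μ‖ ^ 2
      ∂(Measure.pi fun _ => μ) = (1 - ‖∫ v, X v ∂μ‖ ^ 2) / N := by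
  have hNR : (0:ℝ) < (N:ℝ) := by exact_mod_cast Nat.lt_of_lt_of_le Nat.zero_lt_one hN
  set m : ℂ := ∫ v, X v ∂μ with hm_def
  have hXint : Integrable X μ := integrable_of_bound hX.aestronglyMeasurable 1
    (fun v => le_of_eq (hX1 v))
  have hm1 : ‖m‖ ≤ 1 := by
    calc ‖m‖ ≤ ∫ v, ‖X v‖ ∂μ := norm_integral_le_integral_norm X
    _ = 1 := by simp [hX1]
  set Y : E → ℂ := fun v => X v - m with hY_def
  have hYm : Measurable Y := hX.sub measurable_const
  have hYb : ∀ v, ‖Y v‖ ≤ 2 := by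
    intro v
    calc ‖X v - m‖ ≤ ‖X v‖ + ‖m‖ := norm_sub_le _ _
    _ ≤ 2 := by rw [hX1]; linarith
  have hY0 : ∫ v, Y v ∂μ = 0 := by
    rw [hY_def]
    rw [integral_sub hXint (integrable_const m), integral_const]
    simp [hm_def]
  -- rewrite the centered sum
  have key : ∀ V : Fin N → E,
      (N : ℝ)⁻¹ • ∑ i : Fin N, X (V i) - m = (N : ℝ)⁻¹ • ∑ i : Fin N, Y (V i) := by
    intro V
    have : ∑ i : Fin N, Y (V i) = (∑ i : Fin N, X (V i)) - (N : ℕ) • m := by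
      rw [Finset.sum_sub_distrib, Finset.sum_const, Finset.card_univ, Fintype.card_fin]
    rw [this, smul_sub]
    congr 1
    rw [← Nat.cast_smul_eq_nsmul ℝ, smul_smul, inv_mul_cancel₀ (ne_of_gt hNR), one_smul]
  -- expand the square of the norm of a sum
  have normsq_sum : ∀ z : Fin N → ℂ,
      ‖∑ i : Fin N, z i‖ ^ 2 = ∑ i : Fin N, ∑ j : Fin N, (z i * (starRingEnd ℂ) (z j)).re := by
    intro z
    have h1 : ‖∑ i : Fin N, z i‖ ^ 2
        = ((∑ i : Fin N, z i) * (starRingEnd ℂ) (∑ j : Fin N, z j)).re := by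
      rw [Complex.mul_conj]; simp [Complex.sq_norm]
    rw [h1, map_sum, Finset.sum_mul_sum, Complex.re_sum]
    exact Finset.sum_congr rfl fun i _ => Complex.re_sum _ _
  -- measurability and integrability of the pair terms
  have hmeas_pair : ∀ i j : Fin N, Measurable fun V : Fin N → E =>
      (Y (V i) * (starRingEnd ℂ) (Y (V j))).re := by
    intro i j
    exact Complex.measurable_re.comp
      (((hYm.comp (measurable_pi_apply i)).mul
        ((continuous_star.measurable).comp (hYm.comp (measurable_pi_apply j)))))
  have hint_pair : ∀ i j : Fin N, Integrable (fun V : Fin N → E =>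
      (Y (V i) * (starRingEnd ℂ) (Y (V j))).re) (Measure.pi fun _ => μ) := by
    intro i j
    refine integrable_of_bound (hmeas_pair i j).aestronglyMeasurable 4 fun V => ?_
    have h1 : ‖Y (V i) * (starRingEnd ℂ) (Y (V j))‖ ≤ 4 := by
      rw [norm_mul, RCLike.norm_conj]
      calc ‖Y (V i)‖ * ‖Y (V j)‖ ≤ 2 * 2 :=
        mul_le_mul (hYb _) (hYb _) (norm_nonneg _) (by norm_num)
      _ = 4 := by norm_num
    calc ‖(Y (V i) * (starRingEnd ℂ) (Y (V j))).re‖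
        ≤ ‖Y (V i) * (starRingEnd ℂ) (Y (V j))‖ := Complex.abs_re_le_norm _
      _ ≤ 4 := h1
  have hYint : Integrable Y μ := integrable_of_bound hYm.aestronglyMeasurable 2 hYb
  -- diagonal terms
  have hdiag : ∀ i : Fin N, (∫ V : Fin N → E,
      (Y (V i) * (starRingEnd ℂ) (Y (V i))).re ∂(Measure.pi fun _ => μ)) = 1 - ‖m‖ ^ 2 := by
    intro i
    have hchg : (∫ V : Fin N → E, (Y (V i) * (starRingEnd ℂ) (Y (V i))).re
        ∂(Measure.pi fun _ => μ)) = ∫ v, (Y v * (starRingEnd ℂ) (Y v)).re ∂μ := by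
      rw [← map_eval_pi_meas μ i]
      rw [integral_map (measurable_pi_apply i).aemeasurable]
      rw [map_eval_pi_meas μ i]
      exact (Complex.measurable_re.comp
        (hYm.mul (continuous_star.measurable.comp hYm))).aestronglyMeasurable
    rw [hchg]
    have hpt : ∀ v, (Y v * (starRingEnd ℂ) (Y v)).re
        = 1 + ‖m‖ ^ 2 - 2 * (X v * (starRingEnd ℂ) m).re := by
      intro v
      rw [Complex.mul_conj]
      have : Complex.normSq (Y v) = Complex.normSq (X v) + Complex.normSq m
          - 2 * (X v * (starRingEnd ℂ) m).re := Complex.normSq_sub _ _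
      rw [Complex.ofReal_re, this]
      have h1 : Complex.normSq (X v) = 1 := by
        rw [← Complex.sq_norm, hX1]; norm_num
      have h2 : Complex.normSq m = ‖m‖ ^ 2 := by
        rw [← Complex.sq_norm]
      rw [h1, h2]
    simp_rw [hpt]
    have hint2 : Integrable (fun v => (X v * (starRingEnd ℂ) m).re) μ := by
      refine integrable_of_bound ((Complex.measurable_re.comp
        (hX.mul measurable_const))).aestronglyMeasurable (1 * ‖m‖) fun v => ?_
      calc ‖(X v * (starRingEnd ℂ) m).re‖ ≤ ‖X v * (starRingEnd ℂ) m‖ := Complex.abs_re_le_norm _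
        _ = ‖X v‖ * ‖m‖ := by rw [norm_mul, RCLike.norm_conj]
        _ = 1 * ‖m‖ := by rw [hX1]
    rw [integral_sub (integrable_const _) (hint2.const_mul 2), integral_const]
    rw [integral_const_mul, my_integral_re (hXint.mul_const _), integral_mul_const]
    have : (m * (starRingEnd ℂ) m).re = ‖m‖ ^ 2 := by
      rw [Complex.mul_conj, Complex.ofReal_re, ← Complex.sq_norm]
    rw [this]
    simp [measure_univ]
    ring
  -- off-diagonal terms
  have hoff : ∀ i j : Fin N, i ≠ j → (∫ V : Fin N → E,
      (Y (V i) * (starRingEnd ℂ) (Y (V j))).re ∂(Measure.pi fun _ => μ)) = 0 := by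
    intro i j hij
    have hintC : Integrable (fun V : Fin N → E => Y (V i) * (starRingEnd ℂ) (Y (V j)))
        (Measure.pi fun _ => μ) := by
      refine integrable_of_bound ((hYm.comp (measurable_pi_apply i)).mul
        (continuous_star.measurable.comp (hYm.comp (measurable_pi_apply j)))).aestronglyMeasurable
        4 fun V => ?_
      rw [norm_mul, RCLike.norm_conj]
      calc ‖Y (V i)‖ * ‖Y (V j)‖ ≤ 2 * 2 :=
        mul_le_mul (hYb _) (hYb _) (norm_nonneg _) (by norm_num)
      _ = 4 := by norm_num
    rw [my_integral_re hintC]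
    have hchg : (∫ V : Fin N → E, Y (V i) * (starRingEnd ℂ) (Y (V j))
        ∂(Measure.pi fun _ => μ)) = ∫ p : E × E, Y p.1 * (starRingEnd ℂ) (Y p.2) ∂(μ.prod μ) := by
      rw [← map_pair_pi_meas μ hij]
      rw [integral_map ((measurable_pi_apply i).prodMk (measurable_pi_apply j)).aemeasurable]
      rw [map_pair_pi_meas μ hij]
      exact ((hYm.comp measurable_fst).mul
        (continuous_star.measurable.comp (hYm.comp measurable_snd))).aestronglyMeasurable
    rw [hchg, integral_prod_mul Y (fun v => (starRingEnd ℂ) (Y v)), hY0]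
    simp
  -- put it together
  simp_rw [key, norm_smul, mul_pow, normsq_sum]
  rw [integral_const_mul]
  rw [integral_finset_sum _ (fun i _ => integrable_finset_sum _ (fun j _ => hint_pair i j))]
  have : ∀ i : Fin N, (∫ V : Fin N → E, ∑ j : Fin N,
      (Y (V i) * (starRingEnd ℂ) (Y (V j))).re ∂(Measure.pi fun _ => μ))
      = 1 - ‖m‖ ^ 2 := by
    intro i
    rw [integral_finset_sum _ (fun j _ => hint_pair i j)]
    rw [Finset.sum_eq_single i (fun j _ hj => hoff i j (Ne.symm hj)) (by simp)]
    exact hdiag i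
  simp_rw [this]
  rw [Finset.sum_const, Finset.card_univ, Fintype.card_fin, nsmul_eq_mul]
  have hnorm : ‖(N:ℝ)⁻¹‖ = (N:ℝ)⁻¹ := by
    rw [Real.norm_eq_abs, abs_of_nonneg (by positivity)]
  rw [hnorm]
  field_simp

set_option maxHeartbeats 2000000 in
theorem stmt6 (d : ℕ) (hd : 1 ≤ d) (s : ℝ) (hs : 0 < s)
    (f : Measure (Euc d)) (hf : IsProbabilityMeasure f) (N : ℕ) (hN : 1 ≤ N) :
    (∫⁻ V : Fin N → Euc d, homSobSq s (empMeas V) f ∂Measure.pi fun _ => f)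
      = (N : ℝ≥0∞)⁻¹
        * ∫⁻ ξ, ENNReal.ofReal ((1 - ‖fourierM f ξ‖ ^ 2) / ‖ξ‖ ^ (2 * s)) := by
  have hNpos : 0 < (N : ℝ) := by exact_mod_cast Nat.lt_of_lt_of_le Nat.zero_lt_one hN
  set π : Measure (Fin N → Euc d) := Measure.pi fun _ => f with hπ_def
  haveI : IsProbabilityMeasure π := by rw [hπ_def]; infer_instance
  -- Step 1: rewrite the Fourier transform of the empirical measure
  have h1 : (∫⁻ V : Fin N → Euc d, homSobSq s (empMeas V) f ∂π)
      = ∫⁻ V : Fin N → Euc d, (∫⁻ ξ : Euc d, ENNReal.ofReal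
          (‖(N : ℝ)⁻¹ • (∑ i : Fin N,
              Complex.exp (-(Complex.I * ((inner ℝ (V i) ξ : ℝ) : ℂ)))) - fourierM f ξ‖ ^ 2
            / ‖ξ‖ ^ (2 * s))) ∂π := by
    refine lintegral_congr fun V => ?_
    unfold homSobSq
    refine lintegral_congr fun ξ => ?_
    rw [fourierM_empMeas]
  rw [h1]
  -- Step 2: swap the order of integration (Tonelli)
  have hsum : Continuous fun p : (Fin N → Euc d) × Euc d =>
      ∑ i : Fin N, Complex.exp (-(Complex.I * ((inner ℝ (p.1 i) p.2 : ℝ) : ℂ))) :=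
    continuous_finset_sum _ fun i _ =>
      hFcont' d ((continuous_apply i).comp continuous_fst) continuous_snd
  have hD : Measurable fun p : (Fin N → Euc d) × Euc d =>
      (N : ℝ)⁻¹ • (∑ i : Fin N,
        Complex.exp (-(Complex.I * ((inner ℝ (p.1 i) p.2 : ℝ) : ℂ)))) - fourierM f p.2 :=
    (hsum.const_smul ((N : ℝ)⁻¹)).measurable.sub
      ((fourierM_meas f).measurable.comp measurable_snd)
  have hden : Measurable fun p : (Fin N → Euc d) × Euc d => ‖p.2‖ ^ (2 * s) :=
    ((Real.continuous_rpow_const (by linarith)).comp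
      (continuous_norm.comp continuous_snd)).measurable
  have hGmeas : Measurable fun p : (Fin N → Euc d) × Euc d => ENNReal.ofReal
      (‖(N : ℝ)⁻¹ • (∑ i : Fin N,
          Complex.exp (-(Complex.I * ((inner ℝ (p.1 i) p.2 : ℝ) : ℂ)))) - fourierM f p.2‖ ^ 2
        / ‖p.2‖ ^ (2 * s)) :=
    ENNReal.measurable_ofReal.comp ((hD.norm.pow_const 2).div hden)
  have hswap := lintegral_lintegral_swap (μ := π) (ν := (volume : Measure (Euc d)))
    (f := fun (V : Fin N → Euc d) (ξ : Euc d) => ENNReal.ofReal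
      (‖(N : ℝ)⁻¹ • (∑ i : Fin N,
          Complex.exp (-(Complex.I * ((inner ℝ (V i) ξ : ℝ) : ℂ)))) - fourierM f ξ‖ ^ 2
        / ‖ξ‖ ^ (2 * s))) hGmeas.aemeasurable
  rw [hswap]
  -- Step 3: pointwise evaluation of the inner integral
  have hstep : ∀ ξ : Euc d, (∫⁻ V : Fin N → Euc d, ENNReal.ofReal
      (‖(N : ℝ)⁻¹ • (∑ i : Fin N,
          Complex.exp (-(Complex.I * ((inner ℝ (V i) ξ : ℝ) : ℂ)))) - fourierM f ξ‖ ^ 2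
        / ‖ξ‖ ^ (2 * s)) ∂π)
      = (N : ℝ≥0∞)⁻¹ * ENNReal.ofReal ((1 - ‖fourierM f ξ‖ ^ 2) / ‖ξ‖ ^ (2 * s)) := by
    intro ξ
    set X : Euc d → ℂ := fun v => Complex.exp (-(Complex.I * ((inner ℝ v ξ : ℝ) : ℂ))) with hX_def
    have hXm : Measurable X :=
      (hFcont' d continuous_id continuous_const).measurable
    have hX1 : ∀ v, ‖X v‖ = 1 := fun v => hXnorm d ξ v
    have hmval : fourierM f ξ = ∫ v, X v ∂f := rfl
    have hb : 0 ≤ 1 - ‖fourierM f ξ‖ ^ 2 := by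
      nlinarith [fourierM_norm_le f ξ, norm_nonneg (fourierM f ξ)]
    have hval : ∫ V : Fin N → Euc d, ‖(N : ℝ)⁻¹ • (∑ i : Fin N, X (V i))
        - fourierM f ξ‖ ^ 2 ∂π = (1 - ‖fourierM f ξ‖ ^ 2) / N := by
      rw [hmval]
      exact integral_empirical_varsq f hXm hX1 hN
    have hDb : ∀ V : Fin N → Euc d,
        ‖(N : ℝ)⁻¹ • (∑ i : Fin N, X (V i)) - fourierM f ξ‖ ≤ 2 := by
      intro V
      have hsumb : ‖(N : ℝ)⁻¹ • (∑ i : Fin N, X (V i))‖ ≤ 1 := by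
        rw [norm_smul, Real.norm_eq_abs, abs_of_nonneg (by positivity)]
        calc (N : ℝ)⁻¹ * ‖∑ i : Fin N, X (V i)‖
            ≤ (N : ℝ)⁻¹ * ∑ i : Fin N, ‖X (V i)‖ := by
              gcongr
              exact norm_sum_le _ _
          _ = 1 := by
              simp only [hX1, Finset.sum_const, Finset.card_univ, Fintype.card_fin,
                nsmul_eq_mul, mul_one]
              rw [inv_mul_cancel₀ (ne_of_gt hNpos)]
      calc ‖(N : ℝ)⁻¹ • (∑ i : Fin N, X (V i)) - fourierM f ξ‖
          ≤ ‖(N : ℝ)⁻¹ • (∑ i : Fin N, X (V i))‖ + ‖fourierM f ξ‖ := norm_sub_le _ _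
        _ ≤ 2 := by have := fourierM_norm_le f ξ; linarith
    have hDmeas : Measurable fun V : Fin N → Euc d =>
        ‖(N : ℝ)⁻¹ • (∑ i : Fin N, X (V i)) - fourierM f ξ‖ ^ 2 :=
      ((((Finset.univ.measurable_sum (fun i _ => hXm.comp (measurable_pi_apply i))).const_smul
        ((N : ℝ)⁻¹)).sub measurable_const).norm).pow_const 2
    have hDint : Integrable (fun V : Fin N → Euc d =>
        ‖(N : ℝ)⁻¹ • (∑ i : Fin N, X (V i)) - fourierM f ξ‖ ^ 2) π := by
      refine integrable_of_bound hDmeas.aestronglyMeasurable 4 fun V => ?_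
      rw [Real.norm_eq_abs, abs_of_nonneg (sq_nonneg _)]
      nlinarith [hDb V, norm_nonneg ((N : ℝ)⁻¹ • (∑ i : Fin N, X (V i)) - fourierM f ξ)]
    rcases eq_or_lt_of_le (Real.rpow_nonneg (norm_nonneg ξ) (2 * s)) with hc | hc
    · simp [← hc, div_zero]
    · calc (∫⁻ V : Fin N → Euc d, ENNReal.ofReal
          (‖(N : ℝ)⁻¹ • (∑ i : Fin N, X (V i)) - fourierM f ξ‖ ^ 2 / ‖ξ‖ ^ (2 * s)) ∂π)
          = ∫⁻ V : Fin N → Euc d, ENNReal.ofReal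
            (‖(N : ℝ)⁻¹ • (∑ i : Fin N, X (V i)) - fourierM f ξ‖ ^ 2)
            * ENNReal.ofReal ((‖ξ‖ ^ (2 * s))⁻¹) ∂π := by
            refine lintegral_congr fun V => ?_
            rw [div_eq_mul_inv, ENNReal.ofReal_mul (sq_nonneg _)]
        _ = (∫⁻ V : Fin N → Euc d, ENNReal.ofReal
            (‖(N : ℝ)⁻¹ • (∑ i : Fin N, X (V i)) - fourierM f ξ‖ ^ 2) ∂π)
            * ENNReal.ofReal ((‖ξ‖ ^ (2 * s))⁻¹) :=
            lintegral_mul_const' _ _ ENNReal.ofReal_ne_top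
        _ = ENNReal.ofReal ((1 - ‖fourierM f ξ‖ ^ 2) / N)
            * ENNReal.ofReal ((‖ξ‖ ^ (2 * s))⁻¹) := by
            rw [← ofReal_integral_eq_lintegral_ofReal hDint
              (ae_of_all _ fun V => sq_nonneg _), hval]
        _ = (N : ℝ≥0∞)⁻¹ * ENNReal.ofReal ((1 - ‖fourierM f ξ‖ ^ 2) / ‖ξ‖ ^ (2 * s)) := by
            rw [div_eq_mul_inv (1 - ‖fourierM f ξ‖ ^ 2) (N:ℝ),
              ENNReal.ofReal_mul hb,
              div_eq_mul_inv (1 - ‖fourierM f ξ‖ ^ 2) (‖ξ‖ ^ (2 * s)),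
              ENNReal.ofReal_mul hb,
              ENNReal.ofReal_inv_of_pos hNpos, ENNReal.ofReal_natCast]
            ring
  rw [lintegral_congr hstep]
  rw [lintegral_const_mul' _ _ (by
    simp only [ne_eq, ENNReal.inv_eq_top, Nat.cast_eq_zero]
    omega)]
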